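/- Let p be a prime and A a commutative ring in which p·1_A is nilpotent, and let N ⊆ A be a nilpotent ideal. Then there exists a natural number n such that p^n·x = 0 for every element x of the kernel of the induced ring homomorphism W(A) → W(A/N) on p-typical Witt vectors. -/

import Mathlib

open WittVector MvPolynomial

/-- Evaluating a polynomial with zero constant coefficient at elements of an ideal
lands in the ideal. -/
private lemma aeval_mem_of_constantCoeff_zero {A : Type*} [CommRing A] {σ : Type*}
    (φ : MvPolynomial σ ℤ) (f : σ → A) (J : Ideal A) (hf : ∀ s, f s ∈ J)
    (hφ : constantCoeff φ = 0) : aeval f φ ∈ J := by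
  have key : ∀ ψ : MvPolynomial σ ℤ,
      aeval f ψ - algebraMap ℤ A (constantCoeff ψ) ∈ J := by
    intro ψ
    induction ψ using MvPolynomial.induction_on with
    | C a => simp
    | add φ' ψ' hφ' hψ' =>
      have := add_mem hφ' hψ'
      simpa [map_add, add_sub_add_comm] using this
    | mul_X φ' s h =>
      have : aeval f (φ' * X s) - algebraMap ℤ A (constantCoeff (φ' * X s))
          = aeval f φ' * f s := by
        simp [map_mul, constantCoeff_X]
      rw [this]
      exact Ideal.mul_mem_left _ _ (hf s)
  have h := key φ
  rwa [hφ, map_zero, sub_zero] at h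

private lemma constantCoeff_frobeniusPolyAux_zero (p : ℕ) [hp : Fact p.Prime] (n : ℕ) :
    constantCoeff (frobeniusPolyAux p n) = 0 := by
  have h0 : constantCoeff (frobeniusPoly p n) = 0 := by
    have h1 : (frobenius (0 : WittVector p ℤ)).coeff n
        = aeval ((0 : WittVector p ℤ).coeff) (frobeniusPoly p n) := coeff_frobenius _ _
    have h2 : (frobenius (0 : WittVector p ℤ)) = 0 := map_zero (frobenius : WittVector p ℤ →+* _)
    rw [h2] at h1
    have h3 : ((0 : WittVector p ℤ).coeff) = fun _ => (0 : ℤ) := by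
      funext k; exact WittVector.zero_coeff p ℤ k
    rw [h3] at h1
    have h4 := (aeval_zero' (R := ℤ) (S₁ := ℤ) (frobeniusPoly p n)).symm
    rw [← h1] at h4
    simpa using h4
  have hdef : frobeniusPoly p n = X n ^ p + C (p : ℤ) * frobeniusPolyAux p n := rfl
  rw [hdef] at h0
  have hppos : 0 < p := hp.out.pos
  simp only [map_add, map_mul, map_pow, constantCoeff_X, constantCoeff_C,
    zero_pow hppos.ne', zero_add] at h0
  have hpne : (p : ℤ) ≠ 0 := by exact_mod_cast hp.out.ne_zero
  exact (mul_eq_zero.mp h0).resolve_left hpne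

/-- If all coefficients of `x` lie in `J ≤ M` with `p ∈ M`, then all coefficients of
`p * x` lie in `J * M`. -/
private lemma coeff_p_mul_mem {p : ℕ} [hp : Fact p.Prime] {A : Type*} [CommRing A]
    (M J : Ideal A) (hJM : J ≤ M) (hpM : (p : A) ∈ M)
    (x : WittVector p A) (hx : ∀ n, x.coeff n ∈ J) (n : ℕ) :
    ((p : WittVector p A) * x).coeff n ∈ J * M := by
  have hVx : ∀ k, (verschiebung x).coeff k ∈ J := by
    intro k
    cases k with
    | zero => rw [verschiebung_coeff_zero]; exact zero_mem J
    | succ k => rw [verschiebung_coeff_succ]; exact hx k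
  have hmul : (p : WittVector p A) * x = frobenius (verschiebung x) := by
    rw [frobenius_verschiebung, mul_comm]
  rw [hmul, coeff_frobenius]
  have hdef : frobeniusPoly p n = X n ^ p + C (p : ℤ) * frobeniusPolyAux p n := rfl
  rw [hdef, map_add, map_mul, map_pow, aeval_X]
  apply add_mem
  · -- (V x).coeff n ^ p ∈ J * M
    obtain ⟨k, hk0, hk⟩ : ∃ k, 0 < k ∧ p = k + 1 :=
      ⟨p - 1, Nat.sub_pos_of_lt hp.out.one_lt, (Nat.succ_pred_eq_of_pos hp.out.pos).symm⟩
    have hpow : (verschiebung x).coeff n ^ (k + 1)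
        = (verschiebung x).coeff n * (verschiebung x).coeff n ^ k := pow_succ' _ _
    rw [← hk] at hpow
    rw [hpow]
    exact Ideal.mul_mem_mul (hVx n) (Ideal.pow_mem_of_mem M (hJM (hVx n)) _ hk0)
  · -- p * (aux evaluation) ∈ J * M
    have haux : aeval (verschiebung x).coeff (frobeniusPolyAux p n) ∈ J :=
      aeval_mem_of_constantCoeff_zero _ _ J hVx (constantCoeff_frobeniusPolyAux_zero p n)
    have : (aeval (verschiebung x).coeff) (C (p : ℤ)) = algebraMap ℤ A (p : ℤ) := aeval_C _ _
    rw [this]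
    have hcast : algebraMap ℤ A (p : ℤ) = (p : A) := by
      simp
    rw [hcast]
    have hcomm : (p : A) * aeval (verschiebung x).coeff (frobeniusPolyAux p n)
        = aeval (verschiebung x).coeff (frobeniusPolyAux p n) * (p : A) := mul_comm _ _
    rw [hcomm]
    exact Ideal.mul_mem_mul haux hpM

/-- If `p` is nilpotent in `A` and `N ⊆ A` is a nilpotent ideal, then there is an
`n` with `p^n · x = 0` for every `x` in the kernel of the induced map
`W(A) → W(A/N)` on `p`-typical Witt vectors. -/
theorem witt_ker_map_nilpotent_pPowerTorsion
    (p : ℕ) [Fact p.Prime] (A : Type*) [CommRing A]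
    (hpA : IsNilpotent (p : A)) (N : Ideal A) (hN : IsNilpotent N) :
    ∃ n : ℕ, ∀ x ∈ RingHom.ker (WittVector.map (p := p) (Ideal.Quotient.mk N)),
      (p : WittVector p A) ^ n * x = 0 := by
  set M : Ideal A := Ideal.span {(p : A)} ⊔ N with hMdef
  have hpM : (p : A) ∈ M := Submodule.mem_sup_left (Ideal.mem_span_singleton_self _)
  have hNM : N ≤ M := le_sup_right
  have hM : IsNilpotent M := by
    obtain ⟨m, hm⟩ := hpA
    have h1 : IsNilpotent (Ideal.span {(p : A)}) := by
      refine ⟨m, ?_⟩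
      rw [Ideal.span_singleton_pow, hm]
      simp [Ideal.zero_eq_bot, Ideal.span_singleton_eq_bot]
    have h2 : M = Ideal.span {(p : A)} + N := by rw [hMdef, Submodule.add_eq_sup]
    rw [h2]
    exact (Commute.all _ _).isNilpotent_add h1 hN
  obtain ⟨m, hm⟩ := hM
  refine ⟨m, fun x hx => ?_⟩
  have hxN : ∀ n, x.coeff n ∈ N := by
    intro n
    have h0 : (WittVector.map (p := p) (Ideal.Quotient.mk N)) x = 0 := hx
    have h1 : (WittVector.map (p := p) (Ideal.Quotient.mk N) x).coeff n = 0 := by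
      rw [h0]; exact WittVector.zero_coeff p _ n
    rw [WittVector.map_coeff] at h1
    exact (Ideal.Quotient.eq_zero_iff_mem).mp h1
  have key : ∀ k n, ((p : WittVector p A) ^ k * x).coeff n ∈ N * M ^ k := by
    intro k
    induction k with
    | zero => intro n; simpa using hxN n
    | succ k ih =>
      intro n
      have hJM : N * M ^ k ≤ M := le_trans Ideal.mul_le_inf (le_trans inf_le_left hNM)
      have step := coeff_p_mul_mem M (N * M ^ k) hJM hpM
        ((p : WittVector p A) ^ k * x) ih n
      have heq : (p : WittVector p A) ^ (k + 1) * x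
          = (p : WittVector p A) * ((p : WittVector p A) ^ k * x) := by ring
      rw [heq, pow_succ, ← mul_assoc]
      exact step
  ext n
  have h := key m n
  rw [hm, mul_zero] at h
  simpa [Ideal.zero_eq_bot, Ideal.mem_bot] using h
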